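/- Conditional bound k_3 <= inf over rho in (1,3) of (8*rho/(-rho^2+4*rho-3)) * dens(rho): if every packing of balls tangent to a ball B covers at most fraction dens(rho) of the area of S_rho(B), then every contact graph G of a ball packing in R^3 satisfies 2|E|/|V| <= (8*rho/(-rho^2+4*rho-3)) * dens(rho). -/

import Mathlib

open Finset

/-- The contact graph of a ball packing: balls indexed by `ι`, with centers
`o` and radii `r`; two distinct balls are adjacent iff they are tangent. -/
def contactGraph {ι : Type*} (o : ι → EuclideanSpace ℝ (Fin 3)) (r : ι → ℝ) :
    SimpleGraph ι where
  Adj i j := i ≠ j ∧ dist (o i) (o j) = r i + r j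
  symm := by
    constructor
    intro i j ⟨hne, hd⟩
    exact ⟨hne.symm, by rwa [dist_comm, add_comm]⟩
  loopless := by constructor; intro i ⟨hne, _⟩; exact hne rfl

/-- conditional bound on the average degree of contact graphs in ℝ³.
Given a ball packing (positive radii, pairwise disjoint interiors), `ρ ∈ (1,3)`,
and a function `a i j` (the fraction of the area of `S_ρ(B_i)` covered by `B_j`)
satisfying (1) for tangent balls `a i j + a j i ≥ (-ρ²+4ρ-3)/(4ρ)`, and
(2) for each ball `i`, the sum of `a i j` over balls tangent to `i` is at most
`dens`, the contact graph `G = (V,E)` satisfies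
`2|E| ≤ (8ρ/(-ρ²+4ρ-3))·dens·|V|`. -/
theorem stmt13 {ι : Type*} [Fintype ι] [DecidableEq ι] [Nonempty ι]
    (o : ι → EuclideanSpace ℝ (Fin 3)) (r : ι → ℝ)
    (hr : ∀ i, 0 < r i)
    (hpack : ∀ i j, i ≠ j → r i + r j ≤ dist (o i) (o j))
    (ρ : ℝ) (hρ1 : 1 < ρ) (hρ3 : ρ < 3)
    [DecidableRel (contactGraph o r).Adj]
    (dens : ℝ) (a : ι → ι → ℝ)
    (ha_nonneg : ∀ i j, 0 ≤ a i j)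
    (h1 : ∀ i j, (contactGraph o r).Adj i j →
      (-ρ ^ 2 + 4 * ρ - 3) / (4 * ρ) ≤ a i j + a j i)
    (h2 : ∀ i, ∑ j ∈ Finset.univ.filter (fun j => (contactGraph o r).Adj i j),
      a i j ≤ dens) :
    2 * ((contactGraph o r).edgeFinset.card : ℝ) ≤
      (8 * ρ / (-ρ ^ 2 + 4 * ρ - 3)) * dens * (Fintype.card ι : ℝ) := by
  have hnum : 0 < -ρ ^ 2 + 4 * ρ - 3 := by nlinarith
  set c : ℝ := (-ρ ^ 2 + 4 * ρ - 3) / (4 * ρ) with hc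
  have hcpos : 0 < c := div_pos hnum (by linarith)
  set T : Finset (ι × ι) := (Finset.univ ×ˢ Finset.univ).filter
      (fun p => (contactGraph o r).Adj p.1 p.2) with hT
  set S : ℝ := ∑ p ∈ T, a p.1 p.2 with hS
  have key : ∀ f : ι → ι → ℝ, ∑ p ∈ T, f p.1 p.2 =
      ∑ i, ∑ j ∈ Finset.univ.filter (fun j => (contactGraph o r).Adj i j), f i j := by
    intro f
    rw [hT, Finset.sum_filter, Finset.sum_product]
    simp [Finset.sum_filter]
  -- upper bound on S
  have hSupper : S ≤ dens * (Fintype.card ι : ℝ) := by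
    rw [hS, key]
    calc ∑ i, ∑ j ∈ Finset.univ.filter (fun j => (contactGraph o r).Adj i j), a i j
        ≤ ∑ _i : ι, dens := Finset.sum_le_sum (fun i _ => h2 i)
      _ = dens * (Fintype.card ι : ℝ) := by
          rw [Finset.sum_const, Finset.card_univ, nsmul_eq_mul, mul_comm]
  -- swap symmetry
  have hswap : ∑ p ∈ T, a p.2 p.1 = S := by
    rw [hS]
    apply Finset.sum_nbij' (fun p => Prod.swap p) (fun p => Prod.swap p)
    · intro p hp
      simp only [hT, Finset.mem_filter, Finset.mem_product] at hp ⊢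
      exact ⟨⟨Finset.mem_univ _, Finset.mem_univ _⟩, hp.2.symm⟩
    · intro p hp
      simp only [hT, Finset.mem_filter, Finset.mem_product] at hp ⊢
      exact ⟨⟨Finset.mem_univ _, Finset.mem_univ _⟩, hp.2.symm⟩
    · intro p _; simp
    · intro p _; simp
    · intro p _; simp
  -- card of T equals twice edge count
  have hcard : (T.card : ℝ) = 2 * ((contactGraph o r).edgeFinset.card : ℝ) := by
    have : (T.card : ℝ) = ∑ i, ((Finset.univ.filter (fun j => (contactGraph o r).Adj i j)).card : ℝ) := by
      rw [show (T.card : ℝ) = ∑ _p ∈ T, (1:ℝ) by simp, key (fun _ _ => (1:ℝ))]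
      simp
    have hdeg : ∀ i, (Finset.univ.filter (fun j => (contactGraph o r).Adj i j)).card = (contactGraph o r).degree i := by
      intro i
      rw [SimpleGraph.degree, SimpleGraph.neighborFinset_eq_filter]
    rw [this]
    simp only [hdeg]
    rw [show ∑ i, ((contactGraph o r).degree i : ℝ) = ((∑ i, (contactGraph o r).degree i : ℕ) : ℝ) by push_cast; ring,
      SimpleGraph.sum_degrees_eq_twice_card_edges]
    push_cast
    ring
  -- lower bound: c * T.card ≤ 2 * S
  have hlower : c * (T.card : ℝ) ≤ 2 * S := by
    have : ∑ p ∈ T, (c : ℝ) ≤ ∑ p ∈ T, (a p.1 p.2 + a p.2 p.1) := by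
      apply Finset.sum_le_sum
      intro p hp
      simp only [hT, Finset.mem_filter, Finset.mem_product] at hp
      exact h1 p.1 p.2 hp.2
    rw [Finset.sum_const, nsmul_eq_mul, Finset.sum_add_distrib, hswap, ← hS] at this
    linarith [this]
  have hE : c * (2 * ((contactGraph o r).edgeFinset.card : ℝ)) ≤ 2 * (dens * (Fintype.card ι : ℝ)) := by
    rw [← hcard]
    linarith
  have hρ0 : (0:ℝ) < ρ := by linarith
  have hfinal : (8 * ρ / (-ρ ^ 2 + 4 * ρ - 3)) * dens * (Fintype.card ι : ℝ)
      = (2 * (dens * (Fintype.card ι : ℝ))) / c := by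
    rw [hc]
    field_simp
    ring
  rw [hfinal, le_div_iff₀ hcpos]
  linarith
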